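/- Let A = (a_1, …, a_n) and B = (b_0, …, b_{n−1}) be sequences of elements of S and D ⊆ S of size k − n − 1, with A, B, D pairwise disjoint, and let A* be obtained from A by interchanging two of its entries. Then P_D(A*, B) = (−1)^{t+1} P_D(A, B). -/

import Mathlib

/-- `detCols L` is the determinant of the `k × k` matrix whose `j`-th column is the
`j`-th entry of the list `L` (lists of length ≠ `k` are padded with `0`). -/
def detCols {F : Type} [CommRing F] {k : ℕ} (L : List (Fin k → F)) : F :=
  Matrix.det (Matrix.of fun i j : Fin k => L.getD (j : ℕ) 0 i)

/-- The Segre product `P_D(A, B)` of the sequences `A = (a_1, …, a_n)` and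
`B = (b_0, …, b_{n−1})` with base `D`, with respect to the family of tangent functions `T`:
`∏_{i=1}^n T_{D ∪ {a_1,…,a_{i−1},b_i,…,b_{n−1}}}(a_i) ·
  T_{D ∪ {a_1,…,a_{i−1},b_i,…,b_{n−1}}}(b_{i−1})⁻¹`. -/
def segreP {F : Type} [Field F] [DecidableEq F] {k : ℕ}
    (T : Finset (Fin k → F) → (Fin k → F) → F)
    (D : Finset (Fin k → F)) (A B : List (Fin k → F)) : F :=
  ∏ j ∈ Finset.range A.length,
    (T (D ∪ (A.take j).toFinset ∪ (B.drop (j + 1)).toFinset) (A.getD j 0) *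
      (T (D ∪ (A.take j).toFinset ∪ (B.drop (j + 1)).toFinset) (B.getD j 0))⁻¹)

/-- `T` is a family of tangent functions for `S` (with `t` tangent hyperplanes through
each subset of size `k − 2`): for every `Y ⊆ S` with `|Y| = k − 2` there is a set `Φ` of
`t` pairwise linearly independent linear forms, each vanishing on `Y` and nonzero at every
vector of `S \ Y`, with `T Y = ∏_{α ∈ Φ} α`. -/
def IsTangentFamily {F : Type} [Field F] [DecidableEq F] {k : ℕ} (t : ℕ)
    (S : Finset (Fin k → F)) (T : Finset (Fin k → F) → (Fin k → F) → F) : Prop :=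
  ∀ Y : Finset (Fin k → F), Y ⊆ S → Y.card = k - 2 →
    ∃ Φ : Finset ((Fin k → F) →ₗ[F] F),
      Φ.card = t ∧
      (∀ α ∈ Φ, ∀ β ∈ Φ, α ≠ β → ∀ c : F, α ≠ c • β) ∧
      (∀ α ∈ Φ, ∀ y ∈ Y, α y = 0) ∧
      (∀ α ∈ Φ, ∀ s ∈ S, s ∉ Y → α s ≠ 0) ∧
      (∀ x, T Y x = ∏ α ∈ Φ, α x)

/-- The subsequence of `L` consisting of the entries whose positions lie in `s`,
in their original order (`d` is a default value). -/
def subseq {α : Type} (d : α) (L : List α) (s : Finset ℕ) : List α :=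
  ((List.range L.length).filter (fun i => decide (i ∈ s))).map (fun i => L.getD i d)

/-- The subsequence of `L` consisting of the entries whose positions do not lie in `s`,
in their original order (`d` is a default value). -/
def subseqC {α : Type} (d : α) (L : List α) (s : Finset ℕ) : List α :=
  ((List.range L.length).filter (fun i => decide (i ∉ s))).map (fun i => L.getD i d)

/-- The number of transpositions needed (counted as the number of inversions) to reorder a
list of length `len` so that the entries in positions `s` occupy the last `|s|` positions,
preserving the relative order of the two groups. -/
def invCount (s : Finset ℕ) (len : ℕ) : ℕ :=
  ((Finset.range len ×ˢ Finset.range len).filter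
    (fun ij => ij.1 ∈ s ∧ ij.2 ∉ s ∧ ij.1 < ij.2)).card

set_option linter.unusedSectionVars false

section ListHelpers
variable {α : Type*} [DecidableEq α]

lemma cons_set_perm (d c : α) : ∀ (L : List α) (m : ℕ), m < L.length →
    ((L.getD m d) :: L.set m c).Perm (c :: L)
  | y :: ys, 0, _ => by
      simpa using List.Perm.swap c y ys
  | y :: ys, m+1, h => by
      simp only [List.getD_cons_succ, List.set_cons_succ]
      exact ((List.Perm.swap y (ys.getD m d) _).trans
        ((cons_set_perm d c ys m (by simpa using h)).cons y)).trans (List.Perm.swap c y ys)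

lemma swap_perm (d : α) : ∀ (L : List α) (i j : ℕ), i < j → j < L.length →
    ((L.set i (L.getD j d)).set j (L.getD i d)).Perm L
  | [], _, _, _, hj => by simp at hj
  | y :: ys, 0, j+1, _, hj => by
      simp only [List.getD_cons_succ, List.set_cons_zero, List.set_cons_succ, List.getD_cons_zero]
      exact cons_set_perm d y ys j (by simpa using hj)
  | y :: ys, i+1, j+1, hij, hj => by
      simp only [List.getD_cons_succ, List.set_cons_succ, List.getD_cons_zero]
      exact (swap_perm d ys i j (by omega) (by simpa using hj)).cons y

lemma getD_swap (d : α) (L : List α) (i j m : ℕ) (hi : i < L.length) (hj : j < L.length) :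
    ((L.set i (L.getD j d)).set j (L.getD i d)).getD m d =
      if m = j then L.getD i d else if m = i then L.getD j d else L.getD m d := by
  by_cases hm : m < L.length
  · rw [List.getD_eq_getElem _ d (by simpa using hm), List.getElem_set, List.getElem_set]
    by_cases h1 : m = j
    · simp [h1]
    · by_cases h2 : m = i
      · rw [if_neg (by omega), if_pos h2.symm, if_neg h1, if_pos h2]
      · simp [h1, h2, Ne.symm h1, Ne.symm h2, List.getD, List.getElem?_eq_getElem hm]
  · rw [if_neg (by omega), if_neg (by omega), List.getD_eq_default _ d (by simpa using hm),
      List.getD_eq_default _ d (by omega)]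

end ListHelpers


section AlgHelpers
variable {F : Type} [Field F] [DecidableEq F] {k : ℕ} {S : Finset (Fin k → F)}

lemma zero_of_vanish
    (harc : ∀ A ⊆ S, A.card = k →
      LinearIndependent F (fun v : {x // x ∈ A} => (v : Fin k → F)) ∧
      Submodule.span F (A : Set (Fin k → F)) = ⊤)
    (X : Finset (Fin k → F)) (hXS : X ⊆ S) (hXc : X.card = k)
    (φ : (Fin k → F) →ₗ[F] F) (hv : ∀ x ∈ X, φ x = 0) : φ = 0 := by
  have hsp := (harc X hXS hXc).2
  have hle : Submodule.span F (X : Set (Fin k → F)) ≤ LinearMap.ker φ :=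
    Submodule.span_le.mpr (fun x hx => by
      simp only [SetLike.mem_coe, LinearMap.mem_ker]
      exact hv x (by exact_mod_cast hx))
  apply LinearMap.ext; intro v
  have : v ∈ Submodule.span F (X : Set (Fin k → F)) := by rw [hsp]; trivial
  simpa using hle this

lemma exists_form (hk : 3 ≤ k)
    (harc : ∀ A ⊆ S, A.card = k →
      LinearIndependent F (fun v : {x // x ∈ A} => (v : Fin k → F)) ∧
      Submodule.span F (A : Set (Fin k → F)) = ⊤)
    (X : Finset (Fin k → F)) (hXS : X ⊆ S) (hXc : X.card = k - 1)
    (v : Fin k → F) (hvS : v ∈ S) (hvX : v ∉ X) :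
    ∃ φ : (Fin k → F) →ₗ[F] F, (∀ x ∈ X, φ x = 0) ∧ φ v = 1 := by
  have hins : insert v X ⊆ S := Finset.insert_subset hvS hXS
  have hcard : (insert v X).card = k := by
    rw [Finset.card_insert_of_notMem hvX]; omega
  have hspan := (harc _ hins hcard).2
  have hnmem : v ∉ Submodule.span F (X : Set (Fin k → F)) := by
    intro hmem
    have h1 : Submodule.span F (insert v (X : Set (Fin k → F)))
        = Submodule.span F (X : Set (Fin k → F)) := Submodule.span_insert_eq_span hmem
    have h2 : Module.finrank F (Submodule.span F (X : Set (Fin k → F))) ≤ k - 1 := by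
      simpa [Set.finrank, hXc] using finrank_span_finset_le_card X
    rw [Finset.coe_insert, h1] at hspan
    have h3 : Module.finrank F (Fin k → F) = k := Module.finrank_fin_fun F
    have h5 : Module.finrank F (Submodule.span F (X : Set (Fin k → F))) = k := by
      rw [hspan, finrank_top, h3]
    omega
  obtain ⟨f, hf0, hfmap⟩ := Submodule.exists_dual_map_eq_bot_of_notMem hnmem inferInstance
  refine ⟨(f v)⁻¹ • f, fun x hx => ?_, by simp; field_simp⟩
  have hfx : f x ∈ Submodule.map f (Submodule.span F (X : Set (Fin k → F))) :=
    ⟨x, Submodule.subset_span hx, rfl⟩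
  rw [hfmap] at hfx
  simp only [Submodule.mem_bot] at hfx
  simp [hfx]

lemma prod_erase_zero [Fintype F] : ∏ x ∈ Finset.univ.erase (0:F), x = -1 := by
  have himg : Finset.univ.erase (0:F) = Finset.univ.image (fun u : Fˣ => (u : F)) := by
    ext x
    simp only [Finset.mem_erase, Finset.mem_univ, and_true, Finset.mem_image, true_and]
    constructor
    · intro hx
      obtain ⟨u, hu⟩ := isUnit_iff_ne_zero.mpr hx
      exact ⟨u, hu⟩
    · rintro ⟨u, rfl⟩
      exact u.ne_zero
  rw [himg, Finset.prod_image (fun a _ b _ hab => Units.ext hab)]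
  have h1 : ∏ u : Fˣ, (u : F) = ((∏ u : Fˣ, u : Fˣ) : F) := by
    induction (Finset.univ : Finset Fˣ) using Finset.cons_induction with
    | empty => simp
    | cons a s ha ih => rw [Finset.prod_cons, Finset.prod_cons, Units.val_mul, ih]
  rw [h1, FiniteField.prod_univ_units_id_eq_neg_one]
  simp

lemma neg_one_pow_eq {q : ℕ} [Fintype F] (hF : Fintype.card F = q) {m t : ℕ}
    (hmt : m + t + 1 = q) : (-1 : F)^(m+1) = (-1:F)^(t+1) := by
  by_cases h2 : ringChar F = 2
  · have hc : ((ringChar F : ℕ) : F) = 0 := CharP.cast_eq_zero F (ringChar F)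
    rw [h2] at hc; push_cast at hc
    have hneg : (-1 : F) = 1 := by linear_combination -hc
    rw [hneg]; simp
  · obtain ⟨n, hprime, hcardeq⟩ := FiniteField.card F (ringChar F)
    have hodd : Odd q := by
      rw [← hF, hcardeq]; exact (hprime.odd_of_ne_two h2).pow
    obtain ⟨c, hc⟩ := hodd
    have hmod : (m+1) % 2 = (t+1) % 2 := by omega
    rw [neg_one_pow_eq_pow_mod_two, hmod, ← neg_one_pow_eq_pow_mod_two]

end AlgHelpers

section Pencil
variable {F : Type} [Field F] [DecidableEq F] {k : ℕ} {S : Finset (Fin k → F)}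

lemma pencil [Fintype F] {t : ℕ} (hk : 3 ≤ k)
    (harc : ∀ A ⊆ S, A.card = k →
      LinearIndependent F (fun v : {x // x ∈ A} => (v : Fin k → F)) ∧
      Submodule.span F (A : Set (Fin k → F)) = ⊤)
    (hcard : S.card + t = Fintype.card F + k - 1) (hSk : k ≤ S.card)
    (T : Finset (Fin k → F) → (Fin k → F) → F) (hT : IsTangentFamily t S T)
    (Y : Finset (Fin k → F)) (hYS : Y ⊆ S) (hYc : Y.card = k - 2)
    (a b : Fin k → F) (haS : a ∈ S) (hbS : b ∈ S) (haY : a ∉ Y) (hbY : b ∉ Y) (hab : a ≠ b)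
    (φ : (Fin k → F) → ((Fin k → F) →ₗ[F] F))
    (hφY : ∀ u ∈ S \ insert a (insert b Y), ∀ x ∈ Y, φ u x = 0)
    (hφu : ∀ u ∈ S \ insert a (insert b Y), φ u u = 0)
    (hφa : ∀ u ∈ S \ insert a (insert b Y), φ u a = 1) :
    T Y a = - T Y b * ∏ u ∈ S \ insert a (insert b Y), φ u b := by
  set U := S \ insert a (insert b Y) with hU
  have hUfacts : ∀ u ∈ U, u ∈ S ∧ u ≠ a ∧ u ≠ b ∧ u ∉ Y := by
    intro u hu
    simp only [hU, Finset.mem_sdiff, Finset.mem_insert, not_or] at hu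
    tauto
  have hYab_sub : insert a (insert b Y) ⊆ S := by
    intro x hx
    simp only [Finset.mem_insert] at hx
    rcases hx with rfl | rfl | hx
    · exact haS
    · exact hbS
    · exact hYS hx
  have hYab_card : (insert a (insert b Y)).card = k := by
    rw [Finset.card_insert_of_notMem (by simp [hab, haY]),
      Finset.card_insert_of_notMem hbY]
    omega
  have hUcard : U.card = S.card - k := by
    rw [hU, Finset.card_sdiff_of_subset hYab_sub, hYab_card]
  obtain ⟨Φ, hΦc, hΦind, hΦY, hΦS, hΦT⟩ := hT Y hYS hYc
  -- any form vanishing on Y, a, b is zero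
  have hzero : ∀ (ω : (Fin k → F) →ₗ[F] F), (∀ x ∈ Y, ω x = 0) → ω a = 0 → ω b = 0 → ω = 0 := by
    intro ω h1 h2 h3
    refine zero_of_vanish harc _ hYab_sub hYab_card ω ?_
    intro x hx
    simp only [Finset.mem_insert] at hx
    rcases hx with rfl | rfl | hx
    · exact h2
    · exact h3
    · exact h1 x hx
  -- proportionality from equal ratios
  have hprop : ∀ (ω₁ ω₂ : (Fin k → F) →ₗ[F] F), (∀ x ∈ Y, ω₁ x = 0) → (∀ x ∈ Y, ω₂ x = 0) →
      ω₁ a * ω₂ b = ω₂ a * ω₁ b → ω₂ b ≠ 0 → ω₁ = (ω₁ b * (ω₂ b)⁻¹) • ω₂ := by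
    intro ω₁ ω₂ h1 h2 hr hne
    have h0 : ω₁ - (ω₁ b * (ω₂ b)⁻¹) • ω₂ = 0 := by
      refine hzero _ (fun x hx => by simp [h1 x hx, h2 x hx]) ?_ ?_
      · simp only [LinearMap.sub_apply, LinearMap.smul_apply, smul_eq_mul]
        field_simp
        linear_combination hr
      · simp only [LinearMap.sub_apply, LinearMap.smul_apply, smul_eq_mul]
        field_simp
        ring
    linear_combination (norm := module) h0
  -- vanishing on k points of S inside S gives zero: used for contradictions
  have hvan : ∀ (ω : (Fin k → F) →ₗ[F] F) (u u' : Fin k → F), u ∈ S → u' ∈ S → u ∉ Y → u' ∉ Y →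
      u ≠ u' → (∀ x ∈ Y, ω x = 0) → ω u = 0 → ω u' = 0 → ω = 0 := by
    intro ω u u' huS hu'S huY hu'Y huu' h1 h2 h3
    refine zero_of_vanish harc (insert u (insert u' Y)) ?_ ?_ ω ?_
    · intro x hx
      simp only [Finset.mem_insert] at hx
      rcases hx with rfl | rfl | hx
      · exact huS
      · exact hu'S
      · exact hYS hx
    · rw [Finset.card_insert_of_notMem (by simp [huu', huY]),
        Finset.card_insert_of_notMem hu'Y]
      omega
    · intro x hx
      simp only [Finset.mem_insert] at hx
      rcases hx with rfl | rfl | hx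
      · exact h2
      · exact h3
      · exact h1 x hx
  have hφb : ∀ u ∈ U, φ u b ≠ 0 := by
    intro u hu hb0
    obtain ⟨huS, hua, hub, huY⟩ := hUfacts u hu
    have h0 : φ u = 0 := hvan (φ u) u b huS hbS huY hbY hub (hφY u hu) (hφu u hu) hb0
    have := hφa u hu
    rw [h0] at this
    simp at this
  have hβa : ∀ β ∈ Φ, β a ≠ 0 := fun β hβ => hΦS β hβ a haS haY
  have hβb : ∀ β ∈ Φ, β b ≠ 0 := fun β hβ => hΦS β hβ b hbS hbY
  set f₁ : ((Fin k → F) →ₗ[F] F) → F := fun β => β a * (β b)⁻¹ with hf₁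
  set f₂ : (Fin k → F) → F := fun u => (φ u b)⁻¹ with hf₂
  have inj₁ : ∀ x ∈ Φ, ∀ y ∈ Φ, f₁ x = f₁ y → x = y := by
    intro β hβ β' hβ' heq
    by_contra hne
    have hr : β a * β' b = β' a * β b := by
      have heq' : β a / β b = β' a / β' b := by
        simpa [div_eq_mul_inv] using heq
      rwa [div_eq_div_iff (hβb β hβ) (hβb β' hβ')] at heq'
    exact hΦind β hβ β' hβ' hne _ (hprop β β' (hΦY β hβ) (hΦY β' hβ') hr (hβb β' hβ'))
  have inj₂ : ∀ x ∈ U, ∀ y ∈ U, f₂ x = f₂ y → x = y := by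
    intro u hu u' hu' heq
    by_contra hne
    obtain ⟨huS, hua, hub, huY⟩ := hUfacts u hu
    obtain ⟨hu'S, hu'a, hu'b, hu'Y⟩ := hUfacts u' hu'
    have hbeq : φ u b = φ u' b := by
      simp only [hf₂] at heq
      exact inv_injective heq
    have hr : φ u a * φ u' b = φ u' a * φ u b := by
      rw [hφa u hu, hφa u' hu', hbeq]
    have hpp := hprop (φ u) (φ u') (hφY u hu) (hφY u' hu') hr (hφb u' hu')
    have hu'0 : φ u u' = 0 := by
      rw [hpp]
      simp [hφu u' hu']
    have h0 : φ u = 0 := hvan (φ u) u u' huS hu'S huY hu'Y hne (hφY u hu) (hφu u hu) hu'0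
    have := hφa u hu
    rw [h0] at this
    simp at this
  have hdisj12 : Disjoint (Φ.image f₁) (U.image f₂) := by
    rw [Finset.disjoint_left]
    intro c hc1 hc2
    simp only [Finset.mem_image] at hc1 hc2
    obtain ⟨β, hβ, hβc⟩ := hc1
    obtain ⟨u, hu, huc⟩ := hc2
    obtain ⟨huS, hua, hub, huY⟩ := hUfacts u hu
    have hr : β a * φ u b = φ u a * β b := by
      rw [hφa u hu, one_mul]
      have h5 : β a / β b = 1 / φ u b := by
        have h6 : β a * (β b)⁻¹ = (φ u b)⁻¹ := by
          show f₁ β = f₂ u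
          rw [hβc, huc]
        simpa [div_eq_mul_inv] using h6
      have h7 := (div_eq_div_iff (hβb β hβ) (hφb u hu)).mp h5
      linear_combination h7
    have hpp := hprop β (φ u) (hΦY β hβ) (hφY u hu) hr (hφb u hu)
    have : β u = 0 := by rw [hpp]; simp [hφu u hu]
    exact hΦS β hβ u huS huY this
  have hsub : Φ.image f₁ ∪ U.image f₂ ⊆ Finset.univ.erase (0:F) := by
    intro c hc
    simp only [Finset.mem_union, Finset.mem_image] at hc
    rw [Finset.mem_erase]
    refine ⟨?_, Finset.mem_univ _⟩
    rcases hc with ⟨β, hβ, rfl⟩ | ⟨u, hu, rfl⟩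
    · exact mul_ne_zero (hβa β hβ) (inv_ne_zero (hβb β hβ))
    · exact inv_ne_zero (hφb u hu)
  have hc₁ : (Φ.image f₁).card = t := by
    rw [Finset.card_image_of_injOn (fun x hx y hy => inj₁ x (by exact_mod_cast hx) y (by exact_mod_cast hy)), hΦc]
  have hc₂ : (U.image f₂).card = S.card - k := by
    rw [Finset.card_image_of_injOn (fun x hx y hy => inj₂ x (by exact_mod_cast hx) y (by exact_mod_cast hy)), hUcard]
  have hceq : (Finset.univ.erase (0:F)).card = Fintype.card F - 1 := by
    rw [Finset.card_erase_of_mem (Finset.mem_univ _), Finset.card_univ]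
  have hFq : 1 ≤ Fintype.card F := Fintype.card_pos
  have heq : Φ.image f₁ ∪ U.image f₂ = Finset.univ.erase (0:F) := by
    apply Finset.eq_of_subset_of_card_le hsub
    rw [hceq, Finset.card_union_of_disjoint hdisj12, hc₁, hc₂]
    omega
  have hsplit : ∏ c ∈ (Φ.image f₁ ∪ U.image f₂), (c:F) = (∏ β ∈ Φ, f₁ β) * ∏ u ∈ U, f₂ u := by
    rw [Finset.prod_union hdisj12, Finset.prod_image inj₁, Finset.prod_image inj₂]
  have hprodeq : (-1 : F) = (∏ β ∈ Φ, f₁ β) * (∏ u ∈ U, f₂ u) := by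
    rw [← hsplit, heq]
    exact (prod_erase_zero).symm
  have hTa : ∏ β ∈ Φ, f₁ β = T Y a * (T Y b)⁻¹ := by
    rw [hΦT a, hΦT b, ← Finset.prod_inv_distrib, ← Finset.prod_mul_distrib]
  have hTbne : T Y b ≠ 0 := by
    rw [hΦT b]
    exact Finset.prod_ne_zero_iff.mpr hβb
  have hPBne : (∏ u ∈ U, φ u b) ≠ 0 := Finset.prod_ne_zero_iff.mpr hφb
  have hf₂eq : ∏ u ∈ U, f₂ u = (∏ u ∈ U, φ u b)⁻¹ := Finset.prod_inv_distrib _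
  rw [hTa, hf₂eq] at hprodeq
  field_simp at hprodeq
  linear_combination -hprodeq

end Pencil

section Tangent
variable {F : Type} [Field F] [DecidableEq F] {k : ℕ} {S : Finset (Fin k → F)}

lemma tangent_lemma [Fintype F] {t : ℕ} (hk : 3 ≤ k)
    (harc : ∀ A ⊆ S, A.card = k →
      LinearIndependent F (fun v : {x // x ∈ A} => (v : Fin k → F)) ∧
      Submodule.span F (A : Set (Fin k → F)) = ⊤)
    (hcard : S.card + t = Fintype.card F + k - 1) (hSk : k ≤ S.card)
    (T : Finset (Fin k → F) → (Fin k → F) → F) (hT : IsTangentFamily t S T)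
    (Z : Finset (Fin k → F)) (hZS : Z ⊆ S) (hZc : Z.card = k - 3)
    (x y z : Fin k → F) (hxS : x ∈ S) (hyS : y ∈ S) (hzS : z ∈ S)
    (hxy : x ≠ y) (hxz : x ≠ z) (hyz : y ≠ z)
    (hxZ : x ∉ Z) (hyZ : y ∉ Z) (hzZ : z ∉ Z) :
    T (insert x Z) y * T (insert y Z) z * T (insert z Z) x
      = (-1:F)^(t+1) * (T (insert x Z) z * T (insert y Z) x * T (insert z Z) y) := by
  classical
  set W := S \ insert x (insert y (insert z Z)) with hW
  have hWfacts : ∀ u ∈ W, u ∈ S ∧ u ≠ x ∧ u ≠ y ∧ u ≠ z ∧ u ∉ Z := by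
    intro u hu
    simp only [hW, Finset.mem_sdiff, Finset.mem_insert, not_or] at hu
    tauto
  -- generic existence of normalized forms
  have hex : ∀ (a b c : Fin k → F), a ∈ S → b ∈ S → c ∈ S → a ≠ b → a ≠ c → b ≠ c →
      a ∉ Z → b ∉ Z → c ∉ Z →
      ∀ u ∈ W, u ≠ a → u ≠ c →
      ∃ φ : (Fin k → F) →ₗ[F] F, (∀ w ∈ insert u (insert a Z), φ w = 0) ∧ φ c = 1 := by
    intro a b c haS hbS hcS hab hac hbc haZ hbZ hcZ u hu hua huc
    obtain ⟨huS, _, _, _, huZ⟩ := hWfacts u hu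
    refine exists_form hk harc _ ?_ ?_ c hcS ?_
    · intro w hw
      simp only [Finset.mem_insert] at hw
      rcases hw with rfl | rfl | hw
      exacts [huS, haS, hZS hw]
    · rw [Finset.card_insert_of_notMem (by simp [hua, huZ]),
        Finset.card_insert_of_notMem haZ]
      omega
    · simp only [Finset.mem_insert, not_or]
      exact ⟨Ne.symm huc, Ne.symm hac, hcZ⟩
  have hex1 : ∀ u ∈ W, ∃ φ : (Fin k → F) →ₗ[F] F,
      (∀ w ∈ insert u (insert x Z), φ w = 0) ∧ φ y = 1 := fun u hu =>
    hex x z y hxS hzS hyS hxz hxy (Ne.symm hyz) hxZ hzZ hyZ u hu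
      (hWfacts u hu).2.1 (hWfacts u hu).2.2.1
  have hex2 : ∀ u ∈ W, ∃ ψ : (Fin k → F) →ₗ[F] F,
      (∀ w ∈ insert u (insert y Z), ψ w = 0) ∧ ψ z = 1 := fun u hu =>
    hex y x z hyS hxS hzS (Ne.symm hxy) hyz hxz hyZ hxZ hzZ u hu
      (hWfacts u hu).2.2.1 (hWfacts u hu).2.2.2.1
  have hex3 : ∀ u ∈ W, ∃ χ : (Fin k → F) →ₗ[F] F,
      (∀ w ∈ insert u (insert z Z), χ w = 0) ∧ χ x = 1 := fun u hu =>
    hex z y x hzS hyS hxS (Ne.symm hyz) (Ne.symm hxz) (Ne.symm hxy) hzZ hyZ hxZ u hu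
      (hWfacts u hu).2.2.2.1 (hWfacts u hu).2.1
  choose! φ hφ0 hφ1 using hex1
  choose! ψ hψ0 hψ1 using hex2
  choose! χ hχ0 hχ1 using hex3
  -- apply the pencil lemma three times
  have hxZS : insert x Z ⊆ S := Finset.insert_subset hxS hZS
  have hyZS : insert y Z ⊆ S := Finset.insert_subset hyS hZS
  have hzZS : insert z Z ⊆ S := Finset.insert_subset hzS hZS
  have hxZc : (insert x Z).card = k - 2 := by
    rw [Finset.card_insert_of_notMem hxZ]; omega
  have hyZc : (insert y Z).card = k - 2 := by
    rw [Finset.card_insert_of_notMem hyZ]; omega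
  have hzZc : (insert z Z).card = k - 2 := by
    rw [Finset.card_insert_of_notMem hzZ]; omega
  have hW1 : S \ insert y (insert z (insert x Z)) = W := by
    ext w; simp only [hW, Finset.mem_sdiff, Finset.mem_insert, not_or]; tauto
  have hW2 : S \ insert z (insert x (insert y Z)) = W := by
    ext w; simp only [hW, Finset.mem_sdiff, Finset.mem_insert, not_or]; tauto
  have hW3 : S \ insert x (insert y (insert z Z)) = W := rfl
  have E1 : T (insert x Z) y = - T (insert x Z) z * ∏ u ∈ W, φ u z := by
    have := pencil hk harc hcard hSk T hT (insert x Z) hxZS hxZc y z hyS hzS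
      (by simp only [Finset.mem_insert, not_or]; exact ⟨hxy.symm, hyZ⟩)
      (by simp only [Finset.mem_insert, not_or]; exact ⟨hxz.symm, hzZ⟩)
      hyz φ
      (by rw [hW1]; intro u hu w hw; exact hφ0 u hu w (Finset.mem_insert_of_mem hw))
      (by rw [hW1]; intro u hu; exact hφ0 u hu u (Finset.mem_insert_self _ _))
      (by rw [hW1]; intro u hu; exact hφ1 u hu)
    rwa [hW1] at this
  have E2 : T (insert y Z) z = - T (insert y Z) x * ∏ u ∈ W, ψ u x := by
    have := pencil hk harc hcard hSk T hT (insert y Z) hyZS hyZc z x hzS hxS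
      (by simp only [Finset.mem_insert, not_or]; exact ⟨hyz.symm, hzZ⟩)
      (by simp only [Finset.mem_insert, not_or]; exact ⟨hxy, hxZ⟩)
      (Ne.symm hxz) ψ
      (by rw [hW2]; intro u hu w hw; exact hψ0 u hu w (Finset.mem_insert_of_mem hw))
      (by rw [hW2]; intro u hu; exact hψ0 u hu u (Finset.mem_insert_self _ _))
      (by rw [hW2]; intro u hu; exact hψ1 u hu)
    rwa [hW2] at this
  have E3 : T (insert z Z) x = - T (insert z Z) y * ∏ u ∈ W, χ u y := by
    have := pencil hk harc hcard hSk T hT (insert z Z) hzZS hzZc x y hxS hyS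
      (by simp only [Finset.mem_insert, not_or]; exact ⟨hxz, hxZ⟩)
      (by simp only [Finset.mem_insert, not_or]; exact ⟨hyz, hyZ⟩)
      hxy χ
      (by rw [hW3]; intro u hu w hw; exact hχ0 u hu w (Finset.mem_insert_of_mem hw))
      (by rw [hW3]; intro u hu; exact hχ0 u hu u (Finset.mem_insert_self _ _))
      (by rw [hW3]; intro u hu; exact hχ1 u hu)
    rwa [hW3] at this
  -- the per-u identity
  have hperu : ∀ u ∈ W, φ u z * ψ u x * χ u y = -1 := by
    intro u hu
    obtain ⟨huS, hux, huy, huz, huZ⟩ := hWfacts u hu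
    have hφZ : ∀ w ∈ Z, φ u w = 0 := fun w hw =>
      hφ0 u hu w (by simp [Finset.mem_insert, hw])
    have hψZ : ∀ w ∈ Z, ψ u w = 0 := fun w hw =>
      hψ0 u hu w (by simp [Finset.mem_insert, hw])
    have hχZ : ∀ w ∈ Z, χ u w = 0 := fun w hw =>
      hχ0 u hu w (by simp [Finset.mem_insert, hw])
    have hφx : φ u x = 0 := hφ0 u hu x (by simp)
    have hψy : ψ u y = 0 := hψ0 u hu y (by simp)
    have hχz : χ u z = 0 := hχ0 u hu z (by simp)
    have hφu : φ u u = 0 := hφ0 u hu u (by simp)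
    have hψu : ψ u u = 0 := hψ0 u hu u (by simp)
    have hχu : χ u u = 0 := hχ0 u hu u (by simp)
    have hψx : ψ u x ≠ 0 := by
      intro h0
      have hzero : ψ u = 0 := by
        refine zero_of_vanish harc (insert x (insert u (insert y Z))) ?_ ?_ _ ?_
        · intro w hw
          simp only [Finset.mem_insert] at hw
          rcases hw with rfl | rfl | rfl | hw
          exacts [hxS, huS, hyS, hZS hw]
        · rw [Finset.card_insert_of_notMem (by simp [hxy, hxZ, Ne.symm hux]),
            Finset.card_insert_of_notMem (by simp [huy, huZ]),
            Finset.card_insert_of_notMem hyZ]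
          omega
        · intro w hw
          simp only [Finset.mem_insert] at hw
          rcases hw with rfl | rfl | rfl | hw
          exacts [h0, hψu, hψy, hψZ w hw]
      have h1u := hψ1 u hu
      rw [hzero] at h1u
      simpa using h1u
    -- the linear relation χ = c₁ φ + c₂ ψ
    have hrel : χ u - (χ u y) • φ u - (ψ u x)⁻¹ • ψ u = 0 := by
      refine zero_of_vanish harc (insert x (insert y (insert u Z))) ?_ ?_ _ ?_
      · intro w hw
        simp only [Finset.mem_insert] at hw
        rcases hw with rfl | rfl | rfl | hw
        exacts [hxS, hyS, huS, hZS hw]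
      · rw [Finset.card_insert_of_notMem (by simp [hxy, hxZ, Ne.symm hux]),
          Finset.card_insert_of_notMem (by simp [Ne.symm huy, hyZ]),
          Finset.card_insert_of_notMem huZ]
        omega
      · intro w hw
        simp only [Finset.mem_insert] at hw
        have hχ1u := hχ1 u hu
        have hφ1u := hφ1 u hu
        rcases hw with rfl | rfl | rfl | hw
        · simp only [LinearMap.sub_apply, LinearMap.smul_apply, smul_eq_mul]
          rw [hχ1u, hφx]
          field_simp
          ring
        · simp only [LinearMap.sub_apply, LinearMap.smul_apply, smul_eq_mul]
          rw [hφ1u, hψy]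
          ring
        · simp only [LinearMap.sub_apply, LinearMap.smul_apply, smul_eq_mul]
          rw [hχu, hφu, hψu]
          ring
        · simp only [LinearMap.sub_apply, LinearMap.smul_apply, smul_eq_mul]
          rw [hχZ w hw, hφZ w hw, hψZ w hw]
          ring
    have hatz : χ u z - (χ u y) * (φ u z) - (ψ u x)⁻¹ * (ψ u z) = 0 := by
      have := LinearMap.congr_fun hrel z
      simpa using this
    rw [hχz, hψ1 u hu] at hatz
    field_simp at hatz
    linear_combination -hatz
  -- combine
  have hWsub : insert x (insert y (insert z Z)) ⊆ S := by
    intro w hw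
    simp only [Finset.mem_insert] at hw
    rcases hw with rfl | rfl | rfl | hw
    exacts [hxS, hyS, hzS, hZS hw]
  have hWcard : W.card = S.card - k := by
    rw [hW, Finset.card_sdiff_of_subset hWsub,
      Finset.card_insert_of_notMem (by simp [hxy, hxz, hxZ]),
      Finset.card_insert_of_notMem (by simp [hyz, hyZ]),
      Finset.card_insert_of_notMem hzZ, hZc]
    omega
  have hprodneg : (∏ u ∈ W, φ u z) * (∏ u ∈ W, ψ u x) * (∏ u ∈ W, χ u y)
      = (-1:F)^(S.card - k) := by
    rw [← Finset.prod_mul_distrib, ← Finset.prod_mul_distrib,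
      Finset.prod_congr rfl hperu, Finset.prod_const, hWcard]
  have hfin : (-1:F)^(S.card - k + 1) = (-1:F)^(t+1) :=
    neg_one_pow_eq rfl (by omega)
  calc T (insert x Z) y * T (insert y Z) z * T (insert z Z) x
      = (- T (insert x Z) z * ∏ u ∈ W, φ u z) * (- T (insert y Z) x * ∏ u ∈ W, ψ u x)
        * (- T (insert z Z) y * ∏ u ∈ W, χ u y) := by rw [E1, E2, E3]
    _ = -((T (insert x Z) z * T (insert y Z) x * T (insert z Z) y)
        * ((∏ u ∈ W, φ u z) * (∏ u ∈ W, ψ u x) * (∏ u ∈ W, χ u y))) := by ring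
    _ = (-1:F)^(S.card - k + 1) * (T (insert x Z) z * T (insert y Z) x * T (insert z Z) y) := by
        rw [hprodneg]; ring
    _ = (-1:F)^(t+1) * (T (insert x Z) z * T (insert y Z) x * T (insert z Z) y) := by
        rw [hfin]
end Tangent

section MoreList
variable {α : Type*} [DecidableEq α]

lemma not_mem_take_of_nodup (L : List α) (hnd : L.Nodup) (i j : ℕ) (hij : j ≤ i)
    (hi : i < L.length) : L[i] ∉ (L.take j).toFinset := by
  intro hmem
  rw [List.mem_toFinset] at hmem
  have h2 : L[i] ∈ L.drop j := by
    have h3 : (L.drop j)[i - j]'(by simp [List.length_drop]; omega) = L[i] := by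
      rw [List.getElem_drop]; congr 1; omega
    rw [← h3]
    exact List.getElem_mem _
  have hnd' := hnd
  rw [← List.take_append_drop j L, List.nodup_append] at hnd'
  exact hnd'.2.2 _ hmem _ h2 rfl

lemma not_mem_drop_of_nodup (L : List α) (hnd : L.Nodup) (i j : ℕ) (hij : i < j)
    (hi : i < L.length) : L[i] ∉ (L.drop j).toFinset := by
  intro hmem
  rw [List.mem_toFinset] at hmem
  have h2 : L[i] ∈ L.take j := by
    have h3 : (L.take j)[i]'(by simp [List.length_take]; omega) = L[i] :=
      List.getElem_take
    rw [← h3]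
    exact List.getElem_mem _
  have hnd' := hnd
  rw [← List.take_append_drop j L, List.nodup_append] at hnd'
  exact hnd'.2.2 _ h2 _ hmem rfl

lemma take_getD (d : α) (L : List α) (j m : ℕ) (hm : m < j) (hmL : m < L.length) :
    (L.take j).getD m d = L.getD m d := by
  rw [List.getD_eq_getElem _ _ (by simp [List.length_take]; omega),
    List.getD_eq_getElem _ _ hmL, List.getElem_take]

lemma nodup_getElem_ne (L : List α) (hnd : L.Nodup) (i j : ℕ) (hi : i < L.length)
    (hj : j < L.length) (hij : i ≠ j) : L[i] ≠ L[j] := by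
  intro h
  have := (List.Nodup.get_inj_iff hnd (i := ⟨i, hi⟩) (j := ⟨j, hj⟩)).mp (by simpa using h)
  simp at this
  omega

end MoreList

section Adjacent
variable {F : Type} [Field F] [DecidableEq F] {k : ℕ} {S : Finset (Fin k → F)}

lemma T_ne_zero {t : ℕ} (T : Finset (Fin k → F) → (Fin k → F) → F)
    (hT : IsTangentFamily t S T) (Y : Finset (Fin k → F)) (hYS : Y ⊆ S)
    (hYc : Y.card = k - 2) (s : Fin k → F) (hsS : s ∈ S) (hsY : s ∉ Y) : T Y s ≠ 0 := by
  obtain ⟨Φ, _, _, _, hΦS, hΦT⟩ := hT Y hYS hYc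
  rw [hΦT]
  exact Finset.prod_ne_zero_iff.mpr (fun β hβ => hΦS β hβ s hsS hsY)

lemma adjacent_swap [Fintype F] {t n : ℕ} (hk : 3 ≤ k)
    (harc : ∀ A ⊆ S, A.card = k →
      LinearIndependent F (fun v : {x // x ∈ A} => (v : Fin k → F)) ∧
      Submodule.span F (A : Set (Fin k → F)) = ⊤)
    (hcard : S.card + t = Fintype.card F + k - 1) (hSk : k ≤ S.card)
    (T : Finset (Fin k → F) → (Fin k → F) → F) (hT : IsTangentFamily t S T)
    (A B : List (Fin k → F)) (hA : A.length = n) (hB : B.length = n)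
    (hnd : (A ++ B).Nodup) (hin : ∀ v ∈ A ++ B, v ∈ S)
    (D : Finset (Fin k → F)) (hD : D ⊆ S) (hDcard : D.card + n + 1 = k)
    (hdisj : ∀ v ∈ A ++ B, v ∉ D)
    (i : ℕ) (hi : i + 1 < n) :
    segreP T D ((A.set i (A.getD (i+1) 0)).set (i+1) (A.getD i 0)) B
      = (-1:F)^(t+1) * segreP T D A B := by
  classical
  have hndA : A.Nodup := (List.nodup_append.mp hnd).1
  have hndB : B.Nodup := (List.nodup_append.mp hnd).2.1
  have hdAB : A.Disjoint B := List.disjoint_of_nodup_append hnd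
  have hiA : i < A.length := by omega
  have hi1A : i + 1 < A.length := by omega
  have hiB : i < B.length := by omega
  have hi1B : i + 1 < B.length := by omega
  set x : Fin k → F := A.getD i 0 with hxdef
  set b' : Fin k → F := A.getD (i+1) 0 with hb'def
  set z : Fin k → F := B.getD (i+1) 0 with hzdef
  set w : Fin k → F := B.getD i 0 with hwdef
  have hxel : x = A[i] := List.getD_eq_getElem A 0 hiA
  have hb'el : b' = A[i+1] := List.getD_eq_getElem A 0 hi1A
  have hzel : z = B[i+1] := List.getD_eq_getElem B 0 hi1B
  have hwel : w = B[i] := List.getD_eq_getElem B 0 hiB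
  set A' := (A.set i b').set (i+1) x with hA'def
  have hlenA' : A'.length = A.length := by simp [hA'def]
  -- membership facts
  have hxA : x ∈ A := hxel ▸ List.getElem_mem hiA
  have hb'A : b' ∈ A := hb'el ▸ List.getElem_mem hi1A
  have hzB : z ∈ B := hzel ▸ List.getElem_mem hi1B
  have hwB : w ∈ B := hwel ▸ List.getElem_mem hiB
  have hxS : x ∈ S := hin x (by simp [hxA])
  have hb'S : b' ∈ S := hin b' (by simp [hb'A])
  have hzS : z ∈ S := hin z (by simp [hzB])
  have hwS : w ∈ S := hin w (by simp [hwB])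
  have hxb' : x ≠ b' := by
    rw [hxel, hb'el]; exact nodup_getElem_ne A hndA i (i+1) hiA hi1A (by omega)
  have hxz : x ≠ z := fun h => hdAB hxA (h ▸ hzB)
  have hb'z : b' ≠ z := fun h => hdAB hb'A (h ▸ hzB)
  have hxw : x ≠ w := fun h => hdAB hxA (h ▸ hwB)
  have hb'w : b' ≠ w := fun h => hdAB hb'A (h ▸ hwB)
  have hwz : w ≠ z := by
    rw [hwel, hzel]; exact nodup_getElem_ne B hndB i (i+1) hiB hi1B (by omega)
  -- the base finset
  set Zb : Finset (Fin k → F) := D ∪ (A.take i).toFinset ∪ (B.drop (i+2)).toFinset with hZbdef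
  have htkS : ∀ v ∈ (A.take i).toFinset, v ∈ S := fun v hv =>
    hin v (by simp [List.mem_of_mem_take (List.mem_toFinset.mp hv)])
  have hdrS : ∀ v ∈ (B.drop (i+2)).toFinset, v ∈ S := fun v hv =>
    hin v (by simp [List.mem_of_mem_drop (List.mem_toFinset.mp hv)])
  have hZbS : Zb ⊆ S := by
    intro v hv
    simp only [hZbdef, Finset.mem_union] at hv
    rcases hv with (hv | hv) | hv
    exacts [hD hv, htkS v hv, hdrS v hv]
  have hd1 : Disjoint D (A.take i).toFinset := by
    rw [Finset.disjoint_left]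
    intro v hv hv2
    exact hdisj v (by simp [List.mem_of_mem_take (List.mem_toFinset.mp hv2)]) hv
  have hd2 : Disjoint (D ∪ (A.take i).toFinset) (B.drop (i+2)).toFinset := by
    rw [Finset.disjoint_left]
    intro v hv hv2
    have hvB : v ∈ B := List.mem_of_mem_drop (List.mem_toFinset.mp hv2)
    rcases Finset.mem_union.mp hv with hv | hv
    · exact hdisj v (by simp [hvB]) hv
    · exact hdAB (List.mem_of_mem_take (List.mem_toFinset.mp hv)) hvB
  have hZbc : Zb.card = k - 3 := by
    rw [hZbdef, Finset.card_union_of_disjoint hd2, Finset.card_union_of_disjoint hd1,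
      List.toFinset_card_of_nodup (hndA.sublist (List.take_sublist _ _)),
      List.toFinset_card_of_nodup (hndB.sublist (List.drop_sublist _ _)),
      List.length_take, List.length_drop, hA, hB]
    omega
  -- non-membership in Zb
  have hmem_Zb : ∀ v, v ∈ Zb ↔ (v ∈ D ∨ v ∈ (A.take i).toFinset ∨ v ∈ (B.drop (i+2)).toFinset) := by
    intro v; simp [hZbdef, Finset.mem_union, or_assoc]
  have hxZb : x ∉ Zb := by
    rw [hmem_Zb]
    push_neg
    refine ⟨hdisj x (by simp [hxA]), hxel ▸ not_mem_take_of_nodup A hndA i i le_rfl hiA, ?_⟩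
    intro hmem
    exact hdAB hxA (List.mem_of_mem_drop (List.mem_toFinset.mp hmem))
  have hb'Zb : b' ∉ Zb := by
    rw [hmem_Zb]
    push_neg
    refine ⟨hdisj b' (by simp [hb'A]), hb'el ▸ not_mem_take_of_nodup A hndA (i+1) i (by omega) hi1A, ?_⟩
    intro hmem
    exact hdAB hb'A (List.mem_of_mem_drop (List.mem_toFinset.mp hmem))
  have hzZb : z ∉ Zb := by
    rw [hmem_Zb]
    push_neg
    refine ⟨hdisj z (by simp [hzB]), ?_, hzel ▸ not_mem_drop_of_nodup B hndB (i+1) (i+2) (by omega) hi1B⟩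
    intro hmem
    exact hdAB (List.mem_of_mem_take (List.mem_toFinset.mp hmem)) hzB
  have hwZb : w ∉ Zb := by
    rw [hmem_Zb]
    push_neg
    refine ⟨hdisj w (by simp [hwB]), ?_, hwel ▸ not_mem_drop_of_nodup B hndB i (i+2) (by omega) hiB⟩
    intro hmem
    exact hdAB (List.mem_of_mem_take (List.mem_toFinset.mp hmem)) hwB
  -- identification of the index finsets
  have hYi : D ∪ (A.take i).toFinset ∪ (B.drop (i+1)).toFinset = insert z Zb := by
    have hdropB : B.drop (i+1) = z :: B.drop (i+2) := by
      rw [List.drop_eq_getElem_cons hi1B, hzel]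
    rw [hdropB, List.toFinset_cons, Finset.union_insert, hZbdef]
  have htake1 : (A.take (i+1)).toFinset = insert x (A.take i).toFinset := by
    rw [List.take_succ, List.getElem?_eq_getElem hiA, List.toFinset_append]
    rw [← hxel]
    rw [show (some x).toList.toFinset = ({x} : Finset (Fin k → F)) by simp]
    ext v; simp [or_comm]
  have hYi1 : D ∪ (A.take (i+1)).toFinset ∪ (B.drop (i+2)).toFinset = insert x Zb := by
    rw [htake1, Finset.union_insert, Finset.insert_union, hZbdef]
  -- A' facts
  have hA'take_le : ∀ j, j ≤ i → A'.take j = A.take j := by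
    intro j hj
    rw [hA'def, List.take_set, List.take_set,
      List.set_eq_of_length_le (by simp only [List.length_set, List.length_take]; omega),
      List.set_eq_of_length_le (by simp only [List.length_set, List.length_take]; omega)]
  have hA'getD : ∀ m, A'.getD m 0 = if m = i+1 then x else if m = i then b' else A.getD m 0 := by
    intro m
    rw [hA'def, hxdef, hb'def]
    exact getD_swap 0 A i (i+1) m hiA hi1A
  have hA'i : A'.getD i 0 = b' := by
    rw [hA'getD i, if_neg (by omega), if_pos rfl]
  have hA'i1 : A'.getD (i+1) 0 = x := by
    rw [hA'getD (i+1), if_pos rfl]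
  have htake1' : (A'.take (i+1)).toFinset = insert b' (A.take i).toFinset := by
    have hiA' : i < A'.length := by rw [hlenA']; omega
    have hA'iel : A'[i]'hiA' = b' := by
      rw [← List.getD_eq_getElem A' 0 hiA', hA'i]
    rw [List.take_succ, List.getElem?_eq_getElem hiA', hA'iel, List.toFinset_append,
      hA'take_le i le_rfl]
    rw [show (some b').toList.toFinset = ({b'} : Finset (Fin k → F)) by simp]
    ext v; simp [or_comm]
  have hY'i1 : D ∪ (A'.take (i+1)).toFinset ∪ (B.drop (i+2)).toFinset = insert b' Zb := by
    rw [htake1', Finset.union_insert, Finset.insert_union, hZbdef]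
  have htakeEq : ∀ j, i+1 < j → (A'.take j).toFinset = (A.take j).toFinset := by
    intro j hj
    have hb'' : b' = (A.take j).getD (i+1) 0 := (take_getD 0 A j (i+1) hj hi1A).symm
    have hx'' : x = (A.take j).getD i 0 := (take_getD 0 A j i (by omega) hiA).symm
    have h1 : A'.take j = ((A.take j).set i ((A.take j).getD (i+1) 0)).set (i+1)
        ((A.take j).getD i 0) := by
      rw [hA'def, List.take_set, List.take_set, ← hb'', ← hx'']
    rw [h1]
    exact List.toFinset_eq_of_perm _ _ (swap_perm 0 (A.take j) i (i+1) (by omega)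
      (by rw [List.length_take]; omega))
  -- nonvanishing of the relevant tangent function values
  have hinsS : ∀ v : Fin k → F, v ∈ S → insert v Zb ⊆ S := fun v hv =>
    Finset.insert_subset hv hZbS
  have hinsc : ∀ v : Fin k → F, v ∉ Zb → (insert v Zb).card = k - 2 := by
    intro v hv
    rw [Finset.card_insert_of_notMem hv, hZbc]
    omega
  have hT1b' : T (insert x Zb) b' ≠ 0 := T_ne_zero T hT _ (hinsS x hxS) (hinsc x hxZb) b' hb'S
    (by simp only [Finset.mem_insert, not_or]; exact ⟨Ne.symm hxb', hb'Zb⟩)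
  have hT1z : T (insert x Zb) z ≠ 0 := T_ne_zero T hT _ (hinsS x hxS) (hinsc x hxZb) z hzS
    (by simp only [Finset.mem_insert, not_or]; exact ⟨Ne.symm hxz, hzZb⟩)
  have hT2x : T (insert b' Zb) x ≠ 0 := T_ne_zero T hT _ (hinsS b' hb'S) (hinsc b' hb'Zb) x hxS
    (by simp only [Finset.mem_insert, not_or]; exact ⟨hxb', hxZb⟩)
  have hT2z : T (insert b' Zb) z ≠ 0 := T_ne_zero T hT _ (hinsS b' hb'S) (hinsc b' hb'Zb) z hzS
    (by simp only [Finset.mem_insert, not_or]; exact ⟨Ne.symm hb'z, hzZb⟩)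
  have hT3x : T (insert z Zb) x ≠ 0 := T_ne_zero T hT _ (hinsS z hzS) (hinsc z hzZb) x hxS
    (by simp only [Finset.mem_insert, not_or]; exact ⟨hxz, hxZb⟩)
  have hT3b' : T (insert z Zb) b' ≠ 0 := T_ne_zero T hT _ (hinsS z hzS) (hinsc z hzZb) b' hb'S
    (by simp only [Finset.mem_insert, not_or]; exact ⟨hb'z, hb'Zb⟩)
  have hT3w : T (insert z Zb) w ≠ 0 := T_ne_zero T hT _ (hinsS z hzS) (hinsc z hzZb) w hwS
    (by simp only [Finset.mem_insert, not_or]; exact ⟨hwz, hwZb⟩)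
  -- the tangent lemma
  have htan := tangent_lemma hk harc hcard hSk T hT Zb hZbS hZbc x b' z hxS hb'S hzS
    hxb' hxz hb'z hxZb hb'Zb hzZb
  have heps : (-1:F)^(t+1) * (-1:F)^(t+1) = 1 := by
    rw [← mul_pow]; norm_num
  have key : T (insert z Zb) b' * T (insert b' Zb) x * T (insert x Zb) z
      = (-1:F)^(t+1) * (T (insert z Zb) x * T (insert x Zb) b' * T (insert b' Zb) z) := by
    linear_combination (-((-1:F)^(t+1))) * htan
      - (T (insert x Zb) z * T (insert b' Zb) x * T (insert z Zb) b') * heps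
  -- unfold segreP and split the product
  simp only [segreP, hlenA', hA]
  set g : ℕ → F := fun j => T (D ∪ (A.take j).toFinset ∪ (B.drop (j+1)).toFinset) (A.getD j 0) *
      (T (D ∪ (A.take j).toFinset ∪ (B.drop (j+1)).toFinset) (B.getD j 0))⁻¹ with hg
  set g' : ℕ → F := fun j =>
      T (D ∪ (A'.take j).toFinset ∪ (B.drop (j+1)).toFinset) (A'.getD j 0) *
      (T (D ∪ (A'.take j).toFinset ∪ (B.drop (j+1)).toFinset) (B.getD j 0))⁻¹ with hg'
  have hmem_i : i ∈ Finset.range n := Finset.mem_range.mpr (by omega)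
  have hmem_i1 : i+1 ∈ (Finset.range n).erase i := by
    rw [Finset.mem_erase]; exact ⟨by omega, Finset.mem_range.mpr (by omega)⟩
  rw [← Finset.mul_prod_erase _ g' hmem_i, ← Finset.mul_prod_erase _ g' hmem_i1,
    ← Finset.mul_prod_erase _ g hmem_i, ← Finset.mul_prod_erase _ g hmem_i1]
  have hoff : ∀ j ∈ ((Finset.range n).erase i).erase (i+1), g' j = g j := by
    intro j hj
    have hj1 : j ≠ i+1 := (Finset.mem_erase.mp hj).1
    have hj2 : j ≠ i := (Finset.mem_erase.mp (Finset.mem_erase.mp hj).2).1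
    have e1 : A'.getD j 0 = A.getD j 0 := by
      rw [hA'getD j, if_neg hj1, if_neg hj2]
    have e2 : (A'.take j).toFinset = (A.take j).toFinset := by
      rcases le_or_gt j i with hle | hlt
      · rw [hA'take_le j hle]
      · exact htakeEq j (by omega)
    rw [hg, hg']
    simp only [e1, e2]
  rw [Finset.prod_congr rfl hoff]
  -- the values of the four special factors
  have hgi : g i = T (insert z Zb) x * (T (insert z Zb) w)⁻¹ := by
    rw [hg]
    simp only []
    rw [hYi, ← hxdef, ← hwdef]
  have hgi1 : g (i+1) = T (insert x Zb) b' * (T (insert x Zb) z)⁻¹ := by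
    rw [hg]
    simp only []
    rw [hYi1, ← hb'def, ← hzdef]
  have hg'i : g' i = T (insert z Zb) b' * (T (insert z Zb) w)⁻¹ := by
    rw [hg']
    simp only []
    rw [hA'take_le i le_rfl, hYi, hA'i, ← hwdef]
  have hg'i1 : g' (i+1) = T (insert b' Zb) x * (T (insert b' Zb) z)⁻¹ := by
    rw [hg']
    simp only []
    rw [hY'i1, hA'i1, ← hzdef]
  rw [hgi, hgi1, hg'i, hg'i1]
  -- final algebra
  field_simp
  linear_combination (∏ j ∈ ((Finset.range n).erase i).erase (i+1), g j) * key
end Adjacent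

section General
variable {F : Type} [Field F] [DecidableEq F] {k : ℕ} {S : Finset (Fin k → F)}

lemma general_swap [Fintype F] {t n : ℕ} (hk : 3 ≤ k)
    (harc : ∀ A ⊆ S, A.card = k →
      LinearIndependent F (fun v : {x // x ∈ A} => (v : Fin k → F)) ∧
      Submodule.span F (A : Set (Fin k → F)) = ⊤)
    (hcard : S.card + t = Fintype.card F + k - 1) (hSk : k ≤ S.card)
    (T : Finset (Fin k → F) → (Fin k → F) → F) (hT : IsTangentFamily t S T)
    (B : List (Fin k → F)) (hB : B.length = n)
    (D : Finset (Fin k → F)) (hD : D ⊆ S) (hDcard : D.card + n + 1 = k) :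
    ∀ (d : ℕ), 1 ≤ d → ∀ (A : List (Fin k → F)) (i : ℕ), i + d < n →
      A.length = n → (A ++ B).Nodup → (∀ v ∈ A ++ B, v ∈ S) → (∀ v ∈ A ++ B, v ∉ D) →
      segreP T D ((A.set i (A.getD (i+d) 0)).set (i+d) (A.getD i 0)) B
        = (-1:F)^(t+1) * segreP T D A B := by
  intro d
  induction d using Nat.strong_induction_on with
  | _ d IH =>
    intro hd A i hin' hA hnd hinS hdisj
    obtain rfl | ⟨e, rfl⟩ : d = 1 ∨ ∃ e, d = e + 2 := by
      rcases d with _ | _ | e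
      · omega
      · exact Or.inl rfl
      · exact Or.inr ⟨e, rfl⟩
    · exact adjacent_swap hk harc hcard hSk T hT A B hA hB hnd hinS D hD hDcard hdisj i
        (by omega)
    · -- d = e + 2
      set j : ℕ := i + (e + 2) with hjdef
      set A₁ := (A.set i (A.getD (i+1) 0)).set (i+1) (A.getD i 0) with hA₁def
      have hP1 : A₁.Perm A := swap_perm 0 A i (i+1) (by omega) (by omega)
      have hA₁len : A₁.length = n := by simp [hA₁def, hA]
      have hnd1 : (A₁ ++ B).Nodup := ((hP1.append_right B).nodup_iff).mpr hnd
      have hin1 : ∀ v ∈ A₁ ++ B, v ∈ S := fun v hv =>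
        hinS v ((hP1.append_right B).mem_iff.mp hv)
      have hdisj1 : ∀ v ∈ A₁ ++ B, v ∉ D := fun v hv =>
        hdisj v ((hP1.append_right B).mem_iff.mp hv)
      set A₂ := (A₁.set (i+1) (A₁.getD ((i+1)+(e+1)) 0)).set ((i+1)+(e+1)) (A₁.getD (i+1) 0)
        with hA₂def
      have hP2 : A₂.Perm A₁ := swap_perm 0 A₁ (i+1) ((i+1)+(e+1)) (by omega) (by omega)
      have hA₂len : A₂.length = n := by simp [hA₂def, hA₁len]
      have hnd2 : (A₂ ++ B).Nodup := ((hP2.append_right B).nodup_iff).mpr hnd1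
      have hin2 : ∀ v ∈ A₂ ++ B, v ∈ S := fun v hv =>
        hin1 v ((hP2.append_right B).mem_iff.mp hv)
      have hdisj2 : ∀ v ∈ A₂ ++ B, v ∉ D := fun v hv =>
        hdisj1 v ((hP2.append_right B).mem_iff.mp hv)
      set A₃ := (A₂.set i (A₂.getD (i+1) 0)).set (i+1) (A₂.getD i 0) with hA₃def
      have hE1 : segreP T D A₁ B = (-1:F)^(t+1) * segreP T D A B :=
        adjacent_swap hk harc hcard hSk T hT A B hA hB hnd hinS D hD hDcard hdisj i (by omega)
      have hE2 : segreP T D A₂ B = (-1:F)^(t+1) * segreP T D A₁ B :=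
        IH (e+1) (by omega) (by omega) A₁ (i+1) (by omega) hA₁len hnd1 hin1 hdisj1
      have hE3 : segreP T D A₃ B = (-1:F)^(t+1) * segreP T D A₂ B :=
        adjacent_swap hk harc hcard hSk T hT A₂ B hA₂len hB hnd2 hin2 D hD hDcard hdisj2 i
          (by omega)
      -- identify A₃ with the (i, j)-swap of A
      have h1 : ∀ m, A₁.getD m 0 =
          if m = i+1 then A.getD i 0 else if m = i then A.getD (i+1) 0 else A.getD m 0 :=
        fun m => getD_swap 0 A i (i+1) m (by omega) (by omega)
      have h2 : ∀ m, A₂.getD m 0 = if m = (i+1)+(e+1) then A₁.getD (i+1) 0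
          else if m = i+1 then A₁.getD ((i+1)+(e+1)) 0 else A₁.getD m 0 :=
        fun m => getD_swap 0 A₁ (i+1) ((i+1)+(e+1)) m (by omega) (by omega)
      have h3 : ∀ m, A₃.getD m 0 =
          if m = i+1 then A₂.getD i 0 else if m = i then A₂.getD (i+1) 0 else A₂.getD m 0 :=
        fun m => getD_swap 0 A₂ i (i+1) m (by omega) (by omega)
      have hm3 : ∀ m, A₃.getD m 0 =
          if m = j then A.getD i 0 else if m = i then A.getD j 0 else A.getD m 0 := by
        intro m
        rw [h3 m]
        by_cases hmi1 : m = i+1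
        · rw [if_pos hmi1, h2 i, if_neg (by omega), if_neg (by omega), h1 i,
            if_neg (by omega), if_pos rfl, if_neg (by omega), if_neg (by omega), hmi1]
        · by_cases hmi : m = i
          · rw [if_neg hmi1, if_pos hmi, h2 (i+1), if_neg (by omega), if_pos rfl, h1 _,
              if_neg (by omega), if_neg (by omega), if_neg (by omega), if_pos hmi]
            congr 1
            omega
          · rw [if_neg hmi1, if_neg hmi, h2 m]
            by_cases hmj : m = j
            · rw [if_pos (by omega), h1 (i+1), if_pos rfl, if_pos hmj]
            · rw [if_neg (by omega), if_neg hmi1, h1 m, if_neg hmi1, if_neg hmi,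
                if_neg hmj, if_neg hmi]
      have hRgetD : ∀ m, ((A.set i (A.getD j 0)).set j (A.getD i 0)).getD m 0 =
          if m = j then A.getD i 0 else if m = i then A.getD j 0 else A.getD m 0 :=
        fun m => getD_swap 0 A i j m (by omega) (by omega)
      have hRlen : ((A.set i (A.getD j 0)).set j (A.getD i 0)).length = n := by
        simp [hA]
      have hA₃len : A₃.length = n := by simp [hA₃def, hA₂len]
      have hEq : A₃ = (A.set i (A.getD j 0)).set j (A.getD i 0) := by
        apply List.ext_getElem (by omega)
        intro m hm1 hm2
        rw [← List.getD_eq_getElem A₃ 0 hm1, ← List.getD_eq_getElem _ 0 hm2, hm3 m, hRgetD m]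
      have heps : (-1:F)^(t+1) * (-1:F)^(t+1) = 1 := by
        rw [← mul_pow]; norm_num
      calc segreP T D ((A.set i (A.getD j 0)).set j (A.getD i 0)) B
          = segreP T D A₃ B := by rw [hEq]
        _ = (-1:F)^(t+1) * ((-1:F)^(t+1) * ((-1:F)^(t+1) * segreP T D A B)) := by
            rw [hE3, hE2, hE1]
        _ = (-1:F)^(t+1) * segreP T D A B := by
            rw [← mul_assoc, ← mul_assoc, heps, one_mul]
end General

/-- interchanging two entries of `A` in the Segre product `P_D(A, B)`
multiplies it by `(−1)^{t+1}`:  `P_D(A*, B) = (−1)^{t+1} P_D(A, B)`. -/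
theorem statement6 (p h k q t n : ℕ) (hp : p.Prime) (hh : 1 ≤ h) (hq : q = p ^ h)
    (hk : 3 ≤ k)
    (F : Type) [Field F] [Fintype F] [DecidableEq F] (hF : Fintype.card F = q)
    (S : Finset (Fin k → F))
    (harc : ∀ A ⊆ S, A.card = k →
      LinearIndependent F (fun v : {x // x ∈ A} => (v : Fin k → F)) ∧
      Submodule.span F (A : Set (Fin k → F)) = ⊤)
    (ht : S.card + t = q + k - 1) (ht1 : 1 ≤ t) (hSk : k ≤ S.card)
    (T : Finset (Fin k → F) → (Fin k → F) → F) (hT : IsTangentFamily t S T)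
    (A B : List (Fin k → F)) (hA : A.length = n) (hB : B.length = n)
    (hnd : (A ++ B).Nodup) (hin : ∀ v ∈ A ++ B, v ∈ S)
    (D : Finset (Fin k → F)) (hD : D ⊆ S) (hDcard : D.card + n + 1 = k)
    (hdisj : ∀ v ∈ A ++ B, v ∉ D)
    (i j : ℕ) (hi : i < n) (hj : j < n) (hij : i ≠ j)
    (Astar : List (Fin k → F))
    (hAstar : Astar = (A.set i (A.getD j 0)).set j (A.getD i 0)) :
    segreP T D Astar B = (-1 : F) ^ (t + 1) * segreP T D A B := by
  have hcard : S.card + t = Fintype.card F + k - 1 := by rw [hF]; exact ht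
  rcases Nat.lt_or_ge i j with hlt | hge
  · have hgs := general_swap hk harc hcard hSk T hT B hB D hD hDcard (j - i) (by omega) A i
      (by omega) hA hnd hin hdisj
    rw [show i + (j - i) = j from by omega] at hgs
    rw [hAstar]
    exact hgs
  · have hgt : j < i := by omega
    have hgs := general_swap hk harc hcard hSk T hT B hB D hD hDcard (i - j) (by omega) A j
      (by omega) hA hnd hin hdisj
    rw [show j + (i - j) = i from by omega] at hgs
    rw [hAstar, List.set_comm _ _ hij]
    exact hgs
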